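/- Let (g,[.,.]) be a Leibniz algebra over a field K, T a Rota-Baxter operator on g, and (V, l, r, T_V) a representation of the Rota-Baxter Leibniz algebra (g,[.,.],T). Let δ^n denote the Loday–Pirashvili coboundary of (g,[.,.]) with coefficients in (V,l,r), let ∂^n denote the Loday–Pirashvili coboundary of the induced Leibniz algebra (g,[.,.]_*) with coefficients in the induced representation (V,l',r'), and let φ^n : Hom(g^{⊗n},V) → Hom(g^{⊗n},V) be given by φ^n(f)(x_1,…,x_n) = f(Tx_1,…,Tx_n) − Σ_{i=1}^{n} T_V(f(Tx_1,…,Tx_{i−1}, x_i, Tx_{i+1},…,Tx_n)). Then for every n ≥ 1, every n-linear map f : g^{⊗n} → V, and all x_1,…,x_{n+1} ∈ g: φ^{n+1}(δ^n(f))(x_1,…,x_{n+1}) = ∂^n(φ^n(f))(x_1,…,x_{n+1}). -/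

import Mathlib

/-- A bilinear map between modules over a field `K`, expressed as a predicate
on a curried two-argument function. -/
def Bilin (K : Type*) [Field K] {A B C : Type*} [AddCommGroup A] [Module K A]
    [AddCommGroup B] [Module K B] [AddCommGroup C] [Module K C]
    (f : A → B → C) : Prop :=
  (∀ a a' b, f (a + a') b = f a b + f a' b) ∧
  (∀ (c : K) (a : A) (b : B), f (c • a) b = c • f a b) ∧
  (∀ a b b', f a (b + b') = f a b + f a b') ∧
  (∀ (c : K) (a : A) (b : B), f a (c • b) = c • f a b)

/-- The (left) Leibniz identity for a bracket. -/
def IsLeibnizBracket {g : Type*} [AddCommGroup g] (br : g → g → g) : Prop :=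
  ∀ x y z, br x (br y z) = br (br x y) z + br y (br x z)


/-- A representation of a Leibniz algebra `(g, br)` on `V`, given by left and
right actions `l : g → V → V` and `r : V → g → V`. -/
def IsLeibnizRep {g V : Type*} [AddCommGroup g] [AddCommGroup V]
    (br : g → g → g) (l : g → V → V) (r : V → g → V) : Prop :=
  (∀ x y u, l x (l y u) = l (br x y) u + l y (l x u)) ∧
  (∀ x y u, l x (r u y) = r (l x u) y + r u (br x y)) ∧
  (∀ x y u, r u (br x y) = r (r u x) y + l x (r u y))

/-- A representation of a Rota-Baxter Leibniz algebra `(g, br, T)` on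
`(V, l, r, TV)`. -/
def IsRBRep {g V : Type*} [AddCommGroup g] [AddCommGroup V]
    (br : g → g → g) (T : g → g) (l : g → V → V) (r : V → g → V)
    (TV : V → V) : Prop :=
  IsLeibnizRep br l r ∧
  (∀ x u, l (T x) (TV u) = TV (l (T x) u + l x (TV u))) ∧
  (∀ x u, r (TV u) (T x) = TV (r (TV u) x + r u (T x)))

/-- The Loday–Pirashvili coboundary of a Leibniz algebra `(g, br)` with
coefficients in a representation `(V, l, r)`, on `n`-cochains
`f : g^n → V` (indices are `0`-based, corresponding to `x_1, …, x_{n+1}` in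
the classical `1`-based notation). -/
def lpCoboundary {g V : Type*} [AddCommGroup g] [AddCommGroup V]
    (br : g → g → g) (l : g → V → V) (r : V → g → V) (n : ℕ)
    (f : (Fin n → g) → V) : (Fin (n + 1) → g) → V :=
  fun x =>
    (∑ i : Fin n, ((-1 : ℤ) ^ (i : ℕ)) •
        l (x i.castSucc) (f fun k => x (i.castSucc.succAbove k)))
      + ((-1 : ℤ) ^ (n + 1)) • r (f fun k => x k.castSucc) (x (Fin.last n))
      + ∑ i : Fin (n + 1), ∑ j : Fin n,
          if (i : ℕ) ≤ (j : ℕ) then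
            ((-1 : ℤ) ^ ((i : ℕ) + 1)) •
              f (Function.update (fun k => x (i.succAbove k)) j
                  (br (x i) (x j.succ)))
          else 0

/-- The map `φ^n : Hom(g^{⊗n}, V) → Hom(g^{⊗n}, V)` given by
`φ^n(f)(x_1,…,x_n) = f(Tx_1,…,Tx_n)
  - Σ_i T_V (f (Tx_1,…,Tx_{i-1}, x_i, Tx_{i+1},…,Tx_n))`. -/
def phiMap {g V : Type*} [AddCommGroup V] (T : g → g) (TV : V → V) (n : ℕ)
    (f : (Fin n → g) → V) : (Fin n → g) → V :=
  fun x =>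
    f (fun k => T (x k))
      - ∑ i : Fin n, TV (f (Function.update (fun k => T (x k)) i (x i)))

/-- The map `φ` is a chain map from the Loday–Pirashvili complex of
`(g, [.,.])` with coefficients in `(V, l, r)` to the Loday–Pirashvili complex
of the induced Leibniz algebra `(g, [.,.]_*)` with coefficients in the induced
representation `(V, l', r')`:
`φ^{n+1} (δ^n f) = ∂^n (φ^n f)` for all `n ≥ 1` and all `n`-linear `f`. -/


private lemma upd_succAbove {n : ℕ} {γ : Type*} (w : Fin (n+1) → γ) (p : Fin (n+1)) (v : γ) :
    (fun k : Fin n => Function.update w p v (p.succAbove k)) = fun k => w (p.succAbove k) := by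
  funext k; exact Function.update_of_ne (Fin.succAbove_ne p k) v w

private lemma upd_succAbove' {n : ℕ} {γ : Type*} (w : Fin (n+1) → γ) (p : Fin (n+1)) (q : Fin n) (v : γ) :
    (fun k : Fin n => Function.update w (p.succAbove q) v (p.succAbove k))
      = Function.update (fun k => w (p.succAbove k)) q v := by
  funext k
  rcases eq_or_ne k q with h | h
  · subst h; simp
  · rw [Function.update_of_ne (fun hh => h (Fin.succAbove_right_injective hh)) v w,
      Function.update_of_ne h]

private lemma upd_castSucc {n : ℕ} {γ : Type*} (w : Fin (n+1) → γ) (v : γ) :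
    (fun k : Fin n => Function.update w (Fin.last n) v k.castSucc) = fun k => w k.castSucc := by
  funext k; exact Function.update_of_ne (Fin.castSucc_lt_last k).ne v w

private lemma upd_castSucc' {n : ℕ} {γ : Type*} (w : Fin (n+1) → γ) (q : Fin n) (v : γ) :
    (fun k : Fin n => Function.update w q.castSucc v k.castSucc)
      = Function.update (fun k => w k.castSucc) q v := by
  funext k
  rcases eq_or_ne k q with h | h
  · subst h; simp
  · rw [Function.update_of_ne (fun hh => h (Fin.castSucc_injective n hh)) v w,
      Function.update_of_ne h]

private lemma fn_comp_update {ι α β : Type*} [DecidableEq ι] (T : α → β) (w : ι → α) (j : ι) (v : α) :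
    (fun k => T (Function.update w j v k)) = Function.update (fun k => T (w k)) j (T v) := by
  funext k
  rcases eq_or_ne k j with h | h
  · subst h; simp
  · rw [Function.update_of_ne h, Function.update_of_ne h]


section Chunks
variable {g V : Type*} [AddCommGroup g] [AddCommGroup V]

private def partA (l : g → V → V) (n : ℕ) (f : (Fin n → g) → V) (y : Fin (n+1) → g) : V :=
  ∑ i : Fin n, ((-1 : ℤ) ^ (i : ℕ)) • l (y i.castSucc) (f fun k => y (i.castSucc.succAbove k))

private def partB (r : V → g → V) (n : ℕ) (f : (Fin n → g) → V) (y : Fin (n+1) → g) : V :=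
  ((-1 : ℤ) ^ (n + 1)) • r (f fun k => y k.castSucc) (y (Fin.last n))

private def partC (br : g → g → g) (n : ℕ) (f : (Fin n → g) → V) (y : Fin (n+1) → g) : V :=
  ∑ i : Fin (n + 1), ∑ j : Fin n,
    if (i : ℕ) ≤ (j : ℕ) then
      ((-1 : ℤ) ^ ((i : ℕ) + 1)) •
        f (Function.update (fun k => y (i.succAbove k)) j (br (y i) (y j.succ)))
    else 0

private lemma lp_eq (br : g → g → g) (l : g → V → V) (r : V → g → V) (n : ℕ)
    (f : (Fin n → g) → V) (y : Fin (n+1) → g) :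
    lpCoboundary br l r n f y = partA l n f y + partB r n f y + partC br n f y := rfl

private def tfour (l : g → V → V) (TV : V → V) (T : g → g) (n : ℕ)
    (f : (Fin n → g) → V) (x : Fin (n+1) → g) : V :=
  ∑ i : Fin n, ((-1 : ℤ) ^ (i : ℕ)) •
    TV (l (x i.castSucc) (f fun k => T (x (i.castSucc.succAbove k))))

private def tfive (l : g → V → V) (TV : V → V) (T : g → g) (n : ℕ)
    (f : (Fin n → g) → V) (x : Fin (n+1) → g) : V :=
  ∑ i : Fin n, ∑ q : Fin n, ((-1 : ℤ) ^ (i : ℕ)) •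
    TV (l (T (x i.castSucc)) (f (Function.update
      (fun k => T (x (i.castSucc.succAbove k))) q (x (i.castSucc.succAbove q)))))

private def tsix (r : V → g → V) (TV : V → V) (T : g → g) (n : ℕ)
    (f : (Fin n → g) → V) (x : Fin (n+1) → g) : V :=
  ((-1 : ℤ) ^ (n + 1)) • TV (r (f fun k => T (x k.castSucc)) (x (Fin.last n)))

private def tseven (r : V → g → V) (TV : V → V) (T : g → g) (n : ℕ)
    (f : (Fin n → g) → V) (x : Fin (n+1) → g) : V :=
  ∑ q : Fin n, ((-1 : ℤ) ^ (n + 1)) •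
    TV (r (f (Function.update (fun k => T (x k.castSucc)) q (x q.castSucc)))
      (T (x (Fin.last n))))

private def wTup (br : g → g → g) (T : g → g) (n : ℕ) (x : Fin (n+1) → g)
    (i : Fin (n+1)) (j q : Fin n) : Fin n → g :=
  if q = j then
    Function.update (fun k => T (x (i.succAbove k))) j (br (T (x i)) (x j.succ))
  else
    Function.update (Function.update (fun k => T (x (i.succAbove k))) q (x (i.succAbove q)))
      j (br (T (x i)) (T (x j.succ)))

private def teight (br : g → g → g) (TV : V → V) (T : g → g) (n : ℕ)
    (f : (Fin n → g) → V) (x : Fin (n+1) → g) : V :=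
  ∑ i : Fin (n + 1), ∑ j : Fin n,
    if (i : ℕ) ≤ (j : ℕ) then
      ((-1 : ℤ) ^ ((i : ℕ) + 1)) •
        (TV (f (Function.update (fun k => T (x (i.succAbove k))) j
            (br (x i) (T (x j.succ)))))
          + ∑ q : Fin n, TV (f (wTup br T n x i j q)))
    else 0

end Chunks

theorem phi_chain_map {K : Type*} [Field K]
    {g : Type*} [AddCommGroup g] [Module K g]
    {V : Type*} [AddCommGroup V] [Module K V]
    (br : g → g → g) (hbil : Bilin K br) (hleib : IsLeibnizBracket br)
    (T : g → g) (hT : IsLinearMap K T)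
    (hRB : ∀ x y, br (T x) (T y) = T (br (T x) y + br x (T y)))
    (l : g → V → V) (r : V → g → V) (TV : V → V)
    (hl : Bilin K l) (hr : Bilin K r) (hTV : IsLinearMap K TV)
    (hrep : IsRBRep br T l r TV) :
    ∀ (n : ℕ), 1 ≤ n →
      ∀ (f : MultilinearMap K (fun _ : Fin n => g) V) (x : Fin (n + 1) → g),
        phiMap T TV (n + 1) (lpCoboundary br l r n ⇑f) x
          = lpCoboundary (fun a b => br a (T b) + br (T a) b)
              (fun a u => l (T a) u - TV (l a u))
              (fun u a => r u (T a) - TV (r u a)) n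
              (phiMap T TV n ⇑f) x := by
  intro n hn f x
  obtain ⟨hl1, hl2K, hl3, hl4K⟩ := hl
  obtain ⟨hr1, hr2K, hr3, hr4K⟩ := hr
  obtain ⟨⟨hrepl, hreplr, hrepr⟩, hTl, hTr⟩ := hrep
  -- additive homs
  let TVh : V →+ V := AddMonoidHom.mk' TV hTV.map_add
  let lh : g → V →+ V := fun a => AddMonoidHom.mk' (l a) (hl3 a)
  let rh : g → V →+ V := fun a => AddMonoidHom.mk' (fun u => r u a) (fun u v => hr1 u v a)
  have TV0 : TV 0 = 0 := TVh.map_zero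
  have TVadd : ∀ u v, TV (u + v) = TV u + TV v := hTV.map_add
  have TVsub : ∀ u v, TV (u - v) = TV u - TV v := TVh.map_sub
  have TVsmul : ∀ (z : ℤ) (u : V), TV (z • u) = z • TV u := fun z u => TVh.map_zsmul z u
  have TVsum : ∀ (F : Fin (n+1) → V), TV (∑ p, F p) = ∑ p, TV (F p) :=
    fun F => map_sum TVh F Finset.univ
  have TVsum' : ∀ (F : Fin n → V), TV (∑ p, F p) = ∑ p, TV (F p) :=
    fun F => map_sum TVh F Finset.univ
  have lsub : ∀ (a : g) (u v : V), l a (u - v) = l a u - l a v := fun a => (lh a).map_sub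
  have lsum : ∀ (a : g) (F : Fin n → V), l a (∑ q, F q) = ∑ q, l a (F q) :=
    fun a F => map_sum (lh a) F Finset.univ
  have rsub : ∀ (u v : V) (a : g), r (u - v) a = r u a - r v a := fun u v a => (rh a).map_sub u v
  have rsum : ∀ (F : Fin n → V) (a : g), r (∑ q, F q) a = ∑ q, r (F q) a :=
    fun F a => map_sum (rh a) F Finset.univ
  -- rearranged Rota-Baxter representation identities
  have lem1 : ∀ (a : g) (u : V), l (T a) (TV u) - TV (l a (TV u)) = TV (l (T a) u) := by
    intro a u; rw [hTl a u, TVadd]; abel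
  have lem2 : ∀ (u : V) (a : g), r (TV u) (T a) - TV (r (TV u) a) = TV (r u (T a)) := by
    intro u a; rw [hTr a u, TVadd]; abel
  have hTbr : ∀ (a b : g), T (br a (T b) + br (T a) b) = br (T a) (T b) := by
    intro a b; rw [hT.map_add, hRB, hT.map_add]; abel
  -- the left-hand side
  have hL : phiMap T TV (n+1) (lpCoboundary br l r n ⇑f) x
      = (partA l n (⇑f) (fun k => T (x k)) + partB r n (⇑f) (fun k => T (x k))
          + partC br n (⇑f) (fun k => T (x k)))
        - ∑ p : Fin (n+1),
            TV (partA l n (⇑f) (Function.update (fun k => T (x k)) p (x p))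
              + partB r n (⇑f) (Function.update (fun k => T (x k)) p (x p))
              + partC br n (⇑f) (Function.update (fun k => T (x k)) p (x p))) := rfl
  have SA : ∑ p : Fin (n+1), TV (partA l n (⇑f) (Function.update (fun k => T (x k)) p (x p)))
      = tfour l TV T n (⇑f) x + tfive l TV T n (⇑f) x := by
    simp only [partA, tfour, tfive]
    rw [Finset.sum_congr rfl fun p _ => TVsum' _]
    rw [Finset.sum_congr rfl fun p _ => Finset.sum_congr rfl fun i _ => TVsmul _ _]
    rw [Finset.sum_comm, ← Finset.sum_add_distrib]
    refine Finset.sum_congr rfl fun i _ => ?_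
    rw [Fin.sum_univ_succAbove _ i.castSucc]
    congr 1
    · rw [Function.update_self, upd_succAbove]
    · refine Finset.sum_congr rfl fun q _ => ?_
      rw [Function.update_of_ne (Fin.succAbove_ne i.castSucc q).symm, upd_succAbove']
  have SB : ∑ p : Fin (n+1), TV (partB r n (⇑f) (Function.update (fun k => T (x k)) p (x p)))
      = tsix r TV T n (⇑f) x + tseven r TV T n (⇑f) x := by
    simp only [partB, tsix, tseven]
    rw [Finset.sum_congr rfl fun p _ => TVsmul _ _]
    rw [Fin.sum_univ_castSucc
      (f := fun p : Fin (n+1) => ((-1:ℤ) ^ (n+1)) • TV (r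
        ((⇑f : (Fin n → g) → V) fun k => Function.update (fun k => T (x k)) p (x p) k.castSucc)
        (Function.update (fun k => T (x k)) p (x p) (Fin.last n)))), add_comm]
    congr 1
    · rw [Function.update_self, upd_castSucc]
    · refine Finset.sum_congr rfl fun q _ => ?_
      rw [Function.update_of_ne (Fin.castSucc_lt_last q).ne', upd_castSucc']
  have SC : ∑ p : Fin (n+1), TV (partC br n (⇑f) (Function.update (fun k => T (x k)) p (x p)))
      = teight br TV T n (⇑f) x := by
    have TVif : ∀ (c : Prop) [Decidable c] (z : ℤ) (v : V),
        TV (if c then z • v else 0) = if c then z • TV v else 0 := by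
      intro c _ z v; split_ifs
      · exact TVsmul z v
      · exact TV0
    simp only [partC, teight]
    rw [Finset.sum_congr rfl fun p _ => TVsum _]
    rw [Finset.sum_congr rfl fun p _ => Finset.sum_congr rfl fun i _ => TVsum' _]
    rw [Finset.sum_congr rfl fun p _ => Finset.sum_congr rfl fun i _ =>
      Finset.sum_congr rfl fun j _ => TVif _ _ _]
    rw [Finset.sum_comm]
    refine Finset.sum_congr rfl fun i _ => ?_
    rw [Finset.sum_comm]
    refine Finset.sum_congr rfl fun j _ => ?_
    by_cases hij : (i : ℕ) ≤ (j : ℕ)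
    · simp only [if_pos hij]
      have hp : i.succAbove j = j.succ :=
        Fin.succAbove_of_le_castSucc i j (by simpa [Fin.le_def] using hij)
      have hji : j.succ ≠ i := by
        intro h; apply absurd hij; rw [← h]; simp [Fin.val_succ]
      rw [← Finset.smul_sum]
      congr 1
      rw [Fin.sum_univ_succAbove _ i]
      congr 1
      · rw [Function.update_self, upd_succAbove, Function.update_of_ne hji]
      · refine Finset.sum_congr rfl fun q _ => ?_
        rcases eq_or_ne q j with hq | hq
        · subst hq
          rw [wTup, if_pos rfl]
          rw [upd_succAbove' (fun k => T (x k)) i q, Function.update_idem,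
            Function.update_of_ne (Fin.succAbove_ne i q).symm, hp, Function.update_self]
        · rw [wTup, if_neg hq]
          have hpj : i.succAbove q ≠ j.succ := by
            rw [← hp]; exact fun h => hq (Fin.succAbove_right_injective h)
          rw [upd_succAbove' (fun k => T (x k)) i q,
            Function.update_of_ne (Fin.succAbove_ne i q).symm,
            Function.update_of_ne hpj.symm]
    · simp [hij]
  -- the right-hand side
  have RA : partA (fun a u => l (T a) u - TV (l a u)) n (phiMap T TV n ⇑f) x
      = partA l n (⇑f) (fun k => T (x k)) - (tfour l TV T n (⇑f) x + tfive l TV T n (⇑f) x) := by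
    have merge : ∀ (P Q : V) (A B : Fin n → V),
        P - ∑ q, A q - (Q - ∑ q, B q) = P - Q - ∑ q, (A q - B q) := by
      intro P Q A B; rw [Finset.sum_sub_distrib]; abel
    simp only [partA, phiMap, tfour, tfive]
    rw [← Finset.sum_add_distrib, ← Finset.sum_sub_distrib]
    refine Finset.sum_congr rfl fun i _ => ?_
    rw [lsub, lsum, lsub, lsum, TVsub, TVsum', merge,
      Finset.sum_congr rfl fun q _ => lem1 (x i.castSucc) _,
      smul_sub, smul_sub, Finset.smul_sum]
    abel
  have RB : partB (fun u a => r u (T a) - TV (r u a)) n (phiMap T TV n ⇑f) x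
      = partB r n (⇑f) (fun k => T (x k)) - (tsix r TV T n (⇑f) x + tseven r TV T n (⇑f) x) := by
    have merge : ∀ (P Q : V) (A B : Fin n → V),
        P - ∑ q, A q - (Q - ∑ q, B q) = P - Q - ∑ q, (A q - B q) := by
      intro P Q A B; rw [Finset.sum_sub_distrib]; abel
    simp only [partB, phiMap, tsix, tseven]
    rw [rsub, rsum, rsub, rsum, TVsub, TVsum', merge,
      Finset.sum_congr rfl fun q _ => lem2 _ (x (Fin.last n)),
      smul_sub, smul_sub, Finset.smul_sum]
    abel
  have RC : partC (fun a b => br a (T b) + br (T a) b) n (phiMap T TV n ⇑f) x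
      = partC br n (⇑f) (fun k => T (x k)) - teight br TV T n (⇑f) x := by
    simp only [partC, phiMap, teight]
    rw [← Finset.sum_sub_distrib]
    refine Finset.sum_congr rfl fun i _ => ?_
    rw [← Finset.sum_sub_distrib]
    refine Finset.sum_congr rfl fun j _ => ?_
    by_cases hij : (i : ℕ) ≤ (j : ℕ)
    · simp only [if_pos hij]
      have hTZ : (fun k => T (Function.update (fun k => x (i.succAbove k)) j
            (br (x i) (T (x j.succ)) + br (T (x i)) (x j.succ)) k))
          = Function.update (fun k => T (x (i.succAbove k))) j
              (br (T (x i)) (T (x j.succ))) := by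
        rw [fn_comp_update T (fun k => x (i.succAbove k)) j _, hTbr]
      rw [hTZ]
      have hq : ∀ q : Fin n,
          TV ((⇑f : (Fin n → g) → V) (Function.update (Function.update
              (fun k => T (x (i.succAbove k))) j (br (T (x i)) (T (x j.succ)))) q
              (Function.update (fun k => x (i.succAbove k)) j
                (br (x i) (T (x j.succ)) + br (T (x i)) (x j.succ)) q)))
            = (if q = j then
                TV (f (Function.update (fun k => T (x (i.succAbove k))) j
                  (br (x i) (T (x j.succ))))) else 0)
              + TV (f (wTup br T n x i j q)) := by
        intro q
        rcases eq_or_ne q j with h | h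
        · subst h
          rw [if_pos rfl, wTup, if_pos rfl, Function.update_idem, Function.update_self,
            f.map_update_add, TVadd]
        · rw [if_neg h, wTup, if_neg h, Function.update_of_ne h,
            Function.update_comm h.symm, zero_add]
      rw [Finset.sum_congr rfl fun q _ => hq q, Finset.sum_add_distrib,
        Finset.sum_ite_eq' Finset.univ j, if_pos (Finset.mem_univ j), smul_sub]
    · simp [hij]
  rw [hL, lp_eq, RA, RB, RC]
  rw [Finset.sum_congr rfl (fun p _ => TVadd _ _), Finset.sum_add_distrib]
  rw [Finset.sum_congr rfl (fun p _ => TVadd _ _), Finset.sum_add_distrib]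
  rw [SA, SB, SC]
  abel
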